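/- Let β = (β_n) be a Cantor real base and a ∈ ℕ^ℕ with val_β(a) < 1. Then a <_lex d*_β(1). Furthermore, if a does not end in 0^ω and val_β(a) ≤ 1, then a ≤_lex d*_β(1); i.e., d*_β(1) is lexicographically maximal among all infinite β-representations of real numbers in [0,1]. -/
import Mathlib


open Filter

/-- Product of the first `n+1` terms of the base sequence. -/
noncomputable def cprod (β : ℕ → ℝ) (n : ℕ) : ℝ := ∏ i ∈ Finset.range (n+1), β i

/-- A Cantor real base: all terms exceed 1 and the partial products tend to infinity. -/
def IsCantorBase (β : ℕ → ℝ) : Prop :=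
  (∀ n, 1 < β n) ∧ Tendsto (cprod β) atTop atTop

/-- Value of a real-digit sequence in a Cantor base. -/
noncomputable def valB (β : ℕ → ℝ) (a : ℕ → ℝ) : ℝ := ∑' n, a n / cprod β n

/-- Value of a natural-digit sequence in a Cantor base. -/
noncomputable def valN (β : ℕ → ℝ) (a : ℕ → ℕ) : ℝ := valB β (fun n => (a n : ℝ))

/-- Remainders of the greedy algorithm. -/
noncomputable def greedyRem (β : ℕ → ℝ) (x : ℝ) : ℕ → ℝ
  | 0 => β 0 * x - ⌊β 0 * x⌋
  | n+1 => β (n+1) * greedyRem β x n - ⌊β (n+1) * greedyRem β x n⌋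

/-- Digits of the greedy expansion. -/
noncomputable def greedy (β : ℕ → ℝ) (x : ℝ) : ℕ → ℕ
  | 0 => (⌊β 0 * x⌋).toNat
  | n+1 => (⌊β (n+1) * greedyRem β x n⌋).toNat

/-- Remainders of the quasi-greedy algorithm started at `1`:
at each step the largest digit keeping the remainder strictly positive is chosen. -/
noncomputable def qRem (β : ℕ → ℝ) : ℕ → ℝ
  | 0 => β 0 - (⌈β 0⌉ - 1)
  | n+1 => β (n+1) * qRem β n - (⌈β (n+1) * qRem β n⌉ - 1)

/-- Digits of the quasi-greedy expansion of `1`. -/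
noncomputable def quasiGreedy (β : ℕ → ℝ) : ℕ → ℕ
  | 0 => (⌈β 0⌉ - 1).toNat
  | n+1 => (⌈β (n+1) * qRem β n⌉ - 1).toNat

/-- The `n`-shifted base `β^{(n)}`. -/
def shiftBase (β : ℕ → ℝ) (n : ℕ) : ℕ → ℝ := fun k => β (n + k)

/-- The `n`-fold shift `σ^n` of a digit sequence. -/
def shiftSeq (a : ℕ → ℕ) (n : ℕ) : ℕ → ℕ := fun k => a (n + k)

/-- Strict lexicographic order on digit sequences. -/
def LexLt (a b : ℕ → ℕ) : Prop := ∃ ℓ, (∀ k, k < ℓ → a k = b k) ∧ a ℓ < b ℓ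

/-- Lexicographic order on digit sequences. -/
def LexLe (a b : ℕ → ℕ) : Prop := LexLt a b ∨ a = b

/-- The set of greedy expansions of points of `[0,1)`. -/
def Dset (β : ℕ → ℝ) : Set (ℕ → ℕ) := {a | ∃ x ∈ Set.Ico (0:ℝ) 1, a = greedy β x}

lemma ceil_aux {x : ℝ} (hx : 0 < x) :
    (0 < x - ((⌈x⌉:ℝ) - 1) ∧ x - ((⌈x⌉:ℝ) - 1) ≤ 1) ∧ (((⌈x⌉ - 1).toNat : ℝ) = (⌈x⌉:ℝ) - 1) := by
  have h1 : (0:ℤ) < ⌈x⌉ := Int.ceil_pos.mpr hx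
  have h2 : (⌈x⌉:ℝ) < x + 1 := Int.ceil_lt_add_one x
  have h3 : x ≤ (⌈x⌉:ℝ) := Int.le_ceil x
  refine ⟨⟨by linarith, by linarith⟩, ?_⟩
  have : ((⌈x⌉ - 1).toNat : ℤ) = ⌈x⌉ - 1 := Int.toNat_of_nonneg (by omega)
  exact_mod_cast this

lemma qRem0 (β : ℕ → ℝ) : qRem β 0 = β 0 - ((⌈β 0⌉:ℝ) - 1) := rfl

lemma cprod_pos {β : ℕ → ℝ} (h : ∀ n, 1 < β n) (n : ℕ) : 0 < cprod β n :=
  Finset.prod_pos (fun i _ => lt_trans one_pos (h i))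

lemma cprod_succ (β : ℕ → ℝ) (n : ℕ) : cprod β (n+1) = cprod β n * β (n+1) :=
  Finset.prod_range_succ β (n+1)

lemma qRem_mem {β : ℕ → ℝ} (h : ∀ n, 1 < β n) : ∀ n, 0 < qRem β n ∧ qRem β n ≤ 1 := by
  intro n
  induction n with
  | zero => exact (ceil_aux (lt_trans one_pos (h 0))).1
  | succ n ih =>
    have hx : 0 < β (n+1) * qRem β n := mul_pos (lt_trans one_pos (h (n+1))) ih.1
    exact (ceil_aux hx).1

lemma quasi_cast {β : ℕ → ℝ} (h : ∀ n, 1 < β n) : ∀ n,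
    (quasiGreedy β (n+1) : ℝ) = β (n+1) * qRem β n - qRem β (n+1) := by
  intro n
  have hx : 0 < β (n+1) * qRem β n := mul_pos (lt_trans one_pos (h (n+1))) (qRem_mem h n).1
  have := (ceil_aux hx).2
  show (((⌈β (n+1) * qRem β n⌉ - 1).toNat : ℕ) : ℝ) = _
  rw [this]
  show _ = β (n+1) * qRem β n - (β (n+1) * qRem β n - ((⌈β (n+1) * qRem β n⌉:ℝ) - 1))
  ring

lemma quasi_cast0 {β : ℕ → ℝ} (h : ∀ n, 1 < β n) :
    (quasiGreedy β 0 : ℝ) = β 0 - qRem β 0 := by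
  have := (ceil_aux (lt_trans one_pos (h 0))).2
  show (((⌈β 0⌉ - 1).toNat : ℕ) : ℝ) = _
  rw [this, qRem0]; ring

lemma qsum {β : ℕ → ℝ} (h : ∀ n, 1 < β n) (n : ℕ) :
    ∑ k ∈ Finset.range (n+1), (quasiGreedy β k : ℝ) / cprod β k
      = 1 - qRem β n / cprod β n := by
  induction n with
  | zero =>
    have hb : (0:ℝ) < β 0 := lt_trans one_pos (h 0)
    have hc : cprod β 0 = β 0 := by simp [cprod]
    rw [Finset.sum_range_one, quasi_cast0 h, hc]
    field_simp
  | succ n ih =>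
    rw [Finset.sum_range_succ, ih, quasi_cast h, cprod_succ]
    have h1 : cprod β n ≠ 0 := ne_of_gt (cprod_pos h n)
    have h2 : β (n+1) ≠ 0 := ne_of_gt (lt_trans one_pos (h (n+1)))
    field_simp
    ring


lemma quasi_summable {β : ℕ → ℝ} (h : ∀ n, 1 < β n) :
    Summable (fun n => (quasiGreedy β n : ℝ) / cprod β n) := by
  apply summable_of_sum_range_le (c := 1)
    (fun n => div_nonneg (Nat.cast_nonneg _) (le_of_lt (cprod_pos h n)))
  intro n
  cases n with
  | zero => simp
  | succ n =>
    rw [qsum h n]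
    have := (qRem_mem h n).1
    have := cprod_pos h n
    have : 0 < qRem β n / cprod β n := by positivity
    linarith

lemma quasi_val {β : ℕ → ℝ} (hβ : IsCantorBase β) : valN β (quasiGreedy β) = 1 := by
  obtain ⟨h, htop⟩ := hβ
  have hs := quasi_summable h
  have h1 : Tendsto (fun n => ∑ k ∈ Finset.range n, (quasiGreedy β k : ℝ) / cprod β k)
      atTop (nhds (valN β (quasiGreedy β))) := hs.hasSum.tendsto_sum_nat
  have h2 : Tendsto (fun n => ∑ k ∈ Finset.range (n+1), (quasiGreedy β k : ℝ) / cprod β k)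
      atTop (nhds (valN β (quasiGreedy β))) := h1.comp (tendsto_add_atTop_nat 1)
  have h3 : Tendsto (fun n => qRem β n / cprod β n) atTop (nhds 0) := by
    apply squeeze_zero (fun n => le_of_lt (div_pos (qRem_mem h n).1 (cprod_pos h n)))
      (fun n => by
        have := (qRem_mem h n).2
        have hc := cprod_pos h n
        calc qRem β n / cprod β n ≤ 1 / cprod β n := by
              apply div_le_div_of_nonneg_right (qRem_mem h n).2 hc.le
            _ = (cprod β n)⁻¹ := one_div _)
    exact tendsto_inv_atTop_zero.comp htop
  have h4 : Tendsto (fun n => ∑ k ∈ Finset.range (n+1), (quasiGreedy β k : ℝ) / cprod β k)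
      atTop (nhds 1) := by
    simp only [qsum h]
    simpa using (tendsto_const_nhds (x := (1:ℝ))).sub h3
  exact tendsto_nhds_unique h2 h4

lemma tricho (a b : ℕ → ℕ) : LexLt a b ∨ a = b ∨ ∃ ℓ, (∀ k, k < ℓ → a k = b k) ∧ b ℓ < a ℓ := by
  by_cases hab : a = b
  · exact Or.inr (Or.inl hab)
  · have hne : ∃ n, a n ≠ b n := by
      by_contra hc
      push_neg at hc
      exact hab (funext hc)
    classical
    let ℓ := Nat.find hne
    have hpre : ∀ k, k < ℓ → a k = b k := fun k hk => by
      have := Nat.find_min hne hk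
      omega
    have hℓ : a ℓ ≠ b ℓ := Nat.find_spec hne
    rcases lt_or_gt_of_ne hℓ with hlt | hgt
    · exact Or.inl ⟨ℓ, hpre, hlt⟩
    · exact Or.inr (Or.inr ⟨ℓ, hpre, hgt⟩)

lemma lower_bound {β : ℕ → ℝ} (h : ∀ n, 1 < β n) {a : ℕ → ℕ} {ℓ : ℕ}
    (hpre : ∀ k, k < ℓ → a k = quasiGreedy β k) (hlt : quasiGreedy β ℓ < a ℓ) :
    1 ≤ ∑ k ∈ Finset.range (ℓ+1), (a k : ℝ) / cprod β k := by
  have hc := cprod_pos h ℓ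
  have key : ∑ k ∈ Finset.range (ℓ+1), (quasiGreedy β k : ℝ) / cprod β k + 1 / cprod β ℓ
      ≤ ∑ k ∈ Finset.range (ℓ+1), (a k : ℝ) / cprod β k := by
    rw [Finset.sum_range_succ, Finset.sum_range_succ]
    have heq : ∑ k ∈ Finset.range ℓ, (quasiGreedy β k : ℝ) / cprod β k
        = ∑ k ∈ Finset.range ℓ, (a k : ℝ) / cprod β k := by
      apply Finset.sum_congr rfl
      intro k hk
      rw [hpre k (Finset.mem_range.mp hk)]
    rw [heq]
    have : (quasiGreedy β ℓ : ℝ) + 1 ≤ (a ℓ : ℝ) := by exact_mod_cast hlt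
    have : ((quasiGreedy β ℓ : ℝ) + 1) / cprod β ℓ ≤ (a ℓ : ℝ) / cprod β ℓ :=
      div_le_div_of_nonneg_right this hc.le
    rw [add_div] at this
    linarith
  have := qsum h ℓ
  have hr := (qRem_mem h ℓ).2
  have h5 : qRem β ℓ / cprod β ℓ ≤ 1 / cprod β ℓ := div_le_div_of_nonneg_right hr hc.le
  linarith [key, qsum h ℓ]


theorem stmt_12 (β : ℕ → ℝ) (hβ : IsCantorBase β) (a : ℕ → ℕ)
    (hsum : Summable (fun n => (a n : ℝ) / cprod β n)) :
    (valN β a < 1 → LexLt a (quasiGreedy β)) ∧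
    ((¬ ∃ N, ∀ n, N ≤ n → a n = 0) → valN β a ≤ 1 → LexLe a (quasiGreedy β)) := by
  have h := hβ.1
  have hval_eq : valN β a = ∑' n, (a n : ℝ) / cprod β n := rfl
  have hnn : ∀ i, 0 ≤ (a i : ℝ) / cprod β i :=
    fun i => div_nonneg (Nat.cast_nonneg _) (cprod_pos h i).le
  constructor
  · intro hval
    rcases tricho a (quasiGreedy β) with hlt | heq | ⟨ℓ, hpre, hgt⟩
    · exact hlt
    · exfalso; rw [heq, quasi_val hβ] at hval; exact lt_irrefl 1 hval
    · exfalso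
      have h1 : ∑ k ∈ Finset.range (ℓ+1), (a k : ℝ) / cprod β k ≤ valN β a := by
        rw [hval_eq]
        exact Summable.sum_le_tsum _ (fun i _ => hnn i) hsum
      have := lower_bound h hpre hgt
      linarith
  · intro hinf hval
    rcases tricho a (quasiGreedy β) with hlt | heq | ⟨ℓ, hpre, hgt⟩
    · exact Or.inl hlt
    · exact Or.inr heq
    · exfalso
      push_neg at hinf
      obtain ⟨m, hm, hm0⟩ := hinf (ℓ+1)
      have hmem : m ∉ Finset.range (ℓ+1) := by simp; omega
      have h2 : ∑ k ∈ insert m (Finset.range (ℓ+1)), (a k : ℝ) / cprod β k ≤ valN β a := by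
        rw [hval_eq]
        exact Summable.sum_le_tsum _ (fun i _ => hnn i) hsum
      rw [Finset.sum_insert hmem] at h2
      have h3 : (1:ℝ) ≤ (a m : ℝ) := by exact_mod_cast Nat.one_le_iff_ne_zero.mpr hm0
      have h4 : 0 < (a m : ℝ) / cprod β m :=
        div_pos (lt_of_lt_of_le one_pos h3) (cprod_pos h m)
      have := lower_bound h hpre hgt
      linarith
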